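/- Let A : H₁ → H₂ be bounded linear with ‖A‖ > 0 and T : H₂ → H₂ be quasi-nonexpansive with (im A) ∩ Fix T ≠ ∅. If T satisfies the demi-closedness principle (whenever yᵏ ⇀ y weakly and ‖Tyᵏ − yᵏ‖ → 0, then y ∈ Fix T), then the Landweber-type operator V := Id + ‖A‖⁻² A*(T − Id)A also satisfies the demi-closedness principle: whenever xᵏ ⇀ x weakly in H₁ and ‖Vxᵏ − xᵏ‖ → 0, then x ∈ Fix V = A⁻¹(Fix T). -/
import Mathlib

open scoped RealInnerProductSpace
open Filter Topology

theorem stmt_12 {H₁ H₂ : Type*} [NormedAddCommGroup H₁] [InnerProductSpace ℝ H₁]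
    [CompleteSpace H₁] [NormedAddCommGroup H₂] [InnerProductSpace ℝ H₂] [CompleteSpace H₂]
    (A : H₁ →L[ℝ] H₂) (hA : ‖A‖ > 0)
    (T : H₂ → H₂)
    (hfix : ∃ z : H₂, T z = z)
    (hT : ∀ (u z : H₂), T z = z → ‖T u - z‖ ≤ ‖u - z‖)
    (him : ∃ w : H₁, T (A w) = A w)
    (hDC : ∀ (y : ℕ → H₂) (ylim : H₂),
      (∀ u : H₂, Tendsto (fun k => ⟪y k - ylim, u⟫) atTop (𝓝 0)) →
      Tendsto (fun k => ‖T (y k) - y k‖) atTop (𝓝 0) →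
      T ylim = ylim)
    (V : H₁ → H₁)
    (hV : ∀ x : H₁, V x = x + (‖A‖ ^ 2)⁻¹ • (ContinuousLinearMap.adjoint A) (T (A x) - A x)) :
    ∀ (x : ℕ → H₁) (xlim : H₁),
      (∀ u : H₁, Tendsto (fun k => ⟪x k - xlim, u⟫) atTop (𝓝 0)) →
      Tendsto (fun k => ‖V (x k) - x k‖) atTop (𝓝 0) →
      V xlim = xlim ∧ T (A xlim) = A xlim := by
  intro x xlim hw hVx
  obtain ⟨w, hw'⟩ := him
  -- step 1 : ‖A* (T(Ax_k) - Ax_k)‖ → 0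
  have hc : (0:ℝ) < ‖A‖ ^ 2 := by positivity
  have hVeq : ∀ k, ‖V (x k) - x k‖
      = (‖A‖ ^ 2)⁻¹ * ‖(ContinuousLinearMap.adjoint A) (T (A (x k)) - A (x k))‖ := by
    intro k
    rw [hV (x k)]
    simp [norm_smul, abs_of_pos (inv_pos.mpr hc)]
  have h1 : Tendsto (fun k => ‖(ContinuousLinearMap.adjoint A) (T (A (x k)) - A (x k))‖)
      atTop (𝓝 0) := by
    have := hVx.const_mul (‖A‖ ^ 2)
    simp only [mul_zero] at this
    have heq : (fun k => (‖A‖ ^ 2) * ‖V (x k) - x k‖)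
        = fun k => ‖(ContinuousLinearMap.adjoint A) (T (A (x k)) - A (x k))‖ := by
      funext k
      rw [hVeq k, ← mul_assoc, mul_inv_cancel₀ (ne_of_gt hc), one_mul]
    rwa [heq] at this
  -- step 2 : boundedness of x k - xlim
  have hbd : ∃ M : ℝ, ∀ k, ‖x k - xlim‖ ≤ M := by
    have hbs := banach_steinhaus (g := fun k => innerSL ℝ (x k - xlim)) ?_
    · obtain ⟨C, hC⟩ := hbs
      refine ⟨C, fun k => ?_⟩
      have := hC k
      rwa [innerSL_apply_norm] at this
    · intro u
      have h2 : Tendsto (fun k => |⟪x k - xlim, u⟫|) atTop (𝓝 |(0:ℝ)|) :=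
        (continuous_abs.tendsto 0).comp (hw u)
      obtain ⟨C, hC⟩ := h2.bddAbove_range
      refine ⟨C, fun k => ?_⟩
      have h3 := hC (Set.mem_range_self k)
      simp only [Real.norm_eq_abs, innerSL_apply_apply] at h3 ⊢
      exact h3
  obtain ⟨M, hM⟩ := hbd
  -- step 3 : key inequality and ‖T(Ax_k) - Ax_k‖ → 0
  have hkey : ∀ k, ‖T (A (x k)) - A (x k)‖ ^ 2
      ≤ 2 * (M + ‖w - xlim‖) * ‖(ContinuousLinearMap.adjoint A) (T (A (x k)) - A (x k))‖ := by
    intro k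
    set u := A (x k) with hu
    set z := A w with hz
    have hle : ‖T u - z‖ ≤ ‖u - z‖ := hT u z hw'
    have hsq : ‖T u - z‖ ^ 2 ≤ ‖u - z‖ ^ 2 := by
      have := sq_le_sq' (by linarith [norm_nonneg (T u - z)]) hle
      simpa using this
    have hexp : ‖T u - z‖ ^ 2
        = ‖T u - u‖ ^ 2 + 2 * ⟪T u - u, u - z⟫ + ‖u - z‖ ^ 2 := by
      have : T u - z = (T u - u) + (u - z) := by abel
      rw [this, @norm_add_sq_real]
    have hineq : ‖T u - u‖ ^ 2 ≤ 2 * ⟪T u - u, z - u⟫ := by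
      have h3 : ⟪T u - u, z - u⟫ = - ⟪T u - u, u - z⟫ := by
        rw [← inner_neg_right]; congr 1; abel
      rw [h3]; linarith
    have hadj : ⟪T u - u, z - u⟫
        = ⟪(ContinuousLinearMap.adjoint A) (T u - u), w - x k⟫ := by
      rw [ContinuousLinearMap.adjoint_inner_left]
      congr 1
      rw [map_sub]
    have hcs : ⟪(ContinuousLinearMap.adjoint A) (T u - u), w - x k⟫
        ≤ ‖(ContinuousLinearMap.adjoint A) (T u - u)‖ * ‖w - x k‖ :=
      real_inner_le_norm _ _
    have hwx : ‖w - x k‖ ≤ M + ‖w - xlim‖ := by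
      have : w - x k = (w - xlim) - (x k - xlim) := by abel
      rw [this]
      calc ‖(w - xlim) - (x k - xlim)‖ ≤ ‖w - xlim‖ + ‖x k - xlim‖ := norm_sub_le _ _
        _ ≤ M + ‖w - xlim‖ := by linarith [hM k]
    have hnn : (0:ℝ) ≤ ‖(ContinuousLinearMap.adjoint A) (T u - u)‖ := norm_nonneg _
    calc ‖T u - u‖ ^ 2 ≤ 2 * ⟪T u - u, z - u⟫ := hineq
      _ = 2 * ⟪(ContinuousLinearMap.adjoint A) (T u - u), w - x k⟫ := by rw [hadj]
      _ ≤ 2 * (‖(ContinuousLinearMap.adjoint A) (T u - u)‖ * ‖w - x k‖) := by linarith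
      _ ≤ 2 * (M + ‖w - xlim‖) * ‖(ContinuousLinearMap.adjoint A) (T u - u)‖ := by
          nlinarith
  have hsq0 : Tendsto (fun k => ‖T (A (x k)) - A (x k)‖ ^ 2) atTop (𝓝 0) := by
    have hb : Tendsto (fun k => 2 * (M + ‖w - xlim‖) *
        ‖(ContinuousLinearMap.adjoint A) (T (A (x k)) - A (x k))‖) atTop (𝓝 0) := by
      have := h1.const_mul (2 * (M + ‖w - xlim‖))
      simpa using this
    refine squeeze_zero (fun k => by positivity) hkey hb
  have hTA : Tendsto (fun k => ‖T (A (x k)) - A (x k)‖) atTop (𝓝 0) := by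
    have := (Real.continuous_sqrt.tendsto 0).comp hsq0
    simp only [Function.comp_def] at this
    have heq : (fun k => Real.sqrt (‖T (A (x k)) - A (x k)‖ ^ 2))
        = fun k => ‖T (A (x k)) - A (x k)‖ := by
      funext k; exact Real.sqrt_sq (norm_nonneg _)
    rwa [heq, Real.sqrt_zero] at this
  -- step 4 : weak convergence of A x_k to A xlim
  have hwA : ∀ u : H₂, Tendsto (fun k => ⟪A (x k) - A xlim, u⟫) atTop (𝓝 0) := by
    intro u
    have heq : (fun k => ⟪A (x k) - A xlim, u⟫)
        = fun k => ⟪x k - xlim, (ContinuousLinearMap.adjoint A) u⟫ := by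
      funext k
      rw [ContinuousLinearMap.adjoint_inner_right, map_sub]
    rw [heq]
    exact hw _
  -- step 5 : conclude
  have hfixA : T (A xlim) = A xlim := hDC (fun k => A (x k)) (A xlim) hwA hTA
  refine ⟨?_, hfixA⟩
  rw [hV xlim, hfixA, sub_self, map_zero, smul_zero, add_zero]
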